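/- For every step size h ∈ (0,1), every m ≥ 0, α, β ∈ ℝ and every pair (a,b) ∈ ℂ², there exists a unique pair (a',b') ∈ ℂ² satisfying a' − a = (i m h/2)(b' + b) + (i α h/2)(a' + a)|b|² + (i β h/2)(b' + b)·G(a,b) and b' − b = (i m h/2)(a' + a) + (i α h/2)(b' + b)|a|² + (i β h/2)(a' + a)·G(a,b); moreover any such pair satisfies the conservation identity |a'|² + |b'|² = |a|² + |b|². Consequently the QLB scheme is uniquely solvable at each time step and any solution satisfies |u^{k+1}_{n+1}|² + |v^{k+1}_{n−1}|² = |u^k_n|² + |v^k_n|² for all k ≥ 0 and n ∈ ℤ. -/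

import Mathlib

open Complex

noncomputable section

/-- `G(u,v) = conj(u)·v + u·conj(v)`. -/
def Gc (u v : ℂ) : ℂ := (starRingEnd ℂ) u * v + u * (starRingEnd ℂ) v

/-- One step of the quantum lattice Boltzmann (QLB) scheme:
`a, b` are the values `u^k_n, v^k_n` and `a', b'` the values `u^{k+1}_{n+1}, v^{k+1}_{n-1}`. -/
def QLBStep (h m α β : ℝ) (a b a' b' : ℂ) : Prop :=
  a' - a = (Complex.I * (m : ℂ) * (h : ℂ) / 2) * (b' + b)
      + (Complex.I * (α : ℂ) * (h : ℂ) / 2) * (a' + a) * ((‖b‖ ^ 2 : ℝ) : ℂ)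
      + (Complex.I * (β : ℂ) * (h : ℂ) / 2) * (b' + b) * Gc a b
  ∧ b' - b = (Complex.I * (m : ℂ) * (h : ℂ) / 2) * (a' + a)
      + (Complex.I * (α : ℂ) * (h : ℂ) / 2) * (b' + b) * ((‖a‖ ^ 2 : ℝ) : ℂ)
      + (Complex.I * (β : ℂ) * (h : ℂ) / 2) * (a' + a) * Gc a b

/-- `(u, v)` is a solution of the QLB scheme. -/
def IsQLB (h m α β : ℝ) (u v : ℕ → ℤ → ℂ) : Prop :=
  ∀ (k : ℕ) (n : ℤ), QLBStep h m α β (u k n) (v k n) (u (k + 1) (n + 1)) (v (k + 1) (n - 1))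

lemma det_ne (p q r : ℝ) :
    (1 - Complex.I * (p : ℂ)) * (1 - Complex.I * (r : ℂ))
      - (Complex.I * (q : ℂ)) * (Complex.I * (q : ℂ)) ≠ 0 := by
  intro hc
  rw [Complex.ext_iff] at hc
  simp [Complex.add_re, Complex.add_im, Complex.mul_re, Complex.mul_im] at hc
  obtain ⟨h1, h2⟩ := hc
  nlinarith [sq_nonneg p, sq_nonneg q, sq_nonneg r, sq_nonneg (p + r)]

lemma per_pair (h m α β : ℝ) (a b : ℂ) :
    (∃! p : ℂ × ℂ, QLBStep h m α β a b p.1 p.2) ∧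
      (∀ a' b' : ℂ, QLBStep h m α β a b a' b' →
        ‖a'‖ ^ 2 + ‖b'‖ ^ 2 = ‖a‖ ^ 2 + ‖b‖ ^ 2) := by
  set g : ℝ := 2 * ((starRingEnd ℂ) a * b).re with hg
  have hG : Gc a b = ((g : ℝ) : ℂ) := by
    have : a * (starRingEnd ℂ) b = (starRingEnd ℂ) ((starRingEnd ℂ) a * b) := by
      simp [map_mul]
    rw [Gc, this, Complex.add_conj]
    try push_cast [hg]
    try ring
  set p : ℝ := α * h / 2 * ‖b‖ ^ 2 with hp
  set r : ℝ := α * h / 2 * ‖a‖ ^ 2 with hr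
  set q : ℝ := h / 2 * (m + β * g) with hq
  have hiff : ∀ a' b' : ℂ, QLBStep h m α β a b a' b' ↔
      (a' - a = Complex.I * (p : ℂ) * (a' + a) + Complex.I * (q : ℂ) * (b' + b) ∧
       b' - b = Complex.I * (r : ℂ) * (b' + b) + Complex.I * (q : ℂ) * (a' + a)) := by
    intro a' b'
    unfold QLBStep
    rw [hG]
    constructor
    · rintro ⟨e1, e2⟩
      constructor
      · rw [e1]; push_cast [hp, hq]; try ring
      · rw [e2]; push_cast [hr, hq]; try ring
    · rintro ⟨e1, e2⟩
      constructor
      · rw [e1]; push_cast [hp, hq]; try ring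
      · rw [e2]; push_cast [hr, hq]; try ring
  have hd := det_ne p q r
  set d : ℂ := (1 - Complex.I * (p : ℂ)) * (1 - Complex.I * (r : ℂ))
      - (Complex.I * (q : ℂ)) * (Complex.I * (q : ℂ)) with hdd
  set n1 : ℂ := (1 - Complex.I * (r : ℂ)) * ((1 + Complex.I * (p : ℂ)) * a + Complex.I * (q : ℂ) * b)
      + (Complex.I * (q : ℂ)) * ((Complex.I * (q : ℂ)) * a + (1 + Complex.I * (r : ℂ)) * b) with hn1
  set n2 : ℂ := (1 - Complex.I * (p : ℂ)) * ((Complex.I * (q : ℂ)) * a + (1 + Complex.I * (r : ℂ)) * b)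
      + (Complex.I * (q : ℂ)) * ((1 + Complex.I * (p : ℂ)) * a + Complex.I * (q : ℂ) * b) with hn2
  constructor
  · refine ⟨(n1 / d, n2 / d), ?_, ?_⟩
    · show QLBStep h m α β a b (n1 / d) (n2 / d)
      rw [hiff]
      constructor
      · field_simp
        ring
      · field_simp
        ring
    · rintro ⟨x, y⟩ hxy
      rw [hiff] at hxy
      obtain ⟨e1, e2⟩ := hxy
      simp only [Prod.mk.injEq]
      constructor
      · rw [eq_div_iff hd]
        linear_combination (1 - Complex.I * (r : ℂ)) * e1 + Complex.I * (q : ℂ) * e2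
      · rw [eq_div_iff hd]
        linear_combination (1 - Complex.I * (p : ℂ)) * e2 + Complex.I * (q : ℂ) * e1
  · intro a' b' hab
    rw [hiff] at hab
    obtain ⟨e1, e2⟩ := hab
    have c1 := congrArg (starRingEnd ℂ) e1
    have c2 := congrArg (starRingEnd ℂ) e2
    simp only [map_sub, map_add, map_mul, Complex.conj_I, Complex.conj_ofReal] at c1 c2
    have key : ((Complex.normSq a' : ℂ) + Complex.normSq b')
        = (Complex.normSq a : ℂ) + Complex.normSq b := by
      rw [← Complex.mul_conj a', ← Complex.mul_conj b', ← Complex.mul_conj a,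
        ← Complex.mul_conj b]
      linear_combination (((starRingEnd ℂ) a' + (starRingEnd ℂ) a) / 2) * e1
        + ((a' + a) / 2) * c1
        + (((starRingEnd ℂ) b' + (starRingEnd ℂ) b) / 2) * e2
        + ((b' + b) / 2) * c2
    have key' : Complex.normSq a' + Complex.normSq b'
        = Complex.normSq a + Complex.normSq b := by exact_mod_cast key
    simpa [Complex.sq_norm] using key'

theorem stmt0 (h m α β : ℝ) (hh0 : 0 < h) (hh1 : h < 1) (hm : 0 ≤ m) :
    (∀ a b : ℂ,
      (∃! p : ℂ × ℂ, QLBStep h m α β a b p.1 p.2) ∧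
      (∀ a' b' : ℂ, QLBStep h m α β a b a' b' →
        ‖a'‖ ^ 2 + ‖b'‖ ^ 2 = ‖a‖ ^ 2 + ‖b‖ ^ 2)) ∧
    (∀ u v : ℕ → ℤ → ℂ, IsQLB h m α β u v → ∀ (k : ℕ) (n : ℤ),
      ‖u (k + 1) (n + 1)‖ ^ 2 + ‖v (k + 1) (n - 1)‖ ^ 2
        = ‖u k n‖ ^ 2 + ‖v k n‖ ^ 2) := by
  refine ⟨fun a b => per_pair h m α β a b, ?_⟩
  intro u v huv k n
  exact (per_pair h m α β (u k n) (v k n)).2 _ _ (huv k n)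

end
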